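/- Let I ⊆ ℝ be an open interval, let f, h : I → ℝ be smooth with f nowhere zero, let A, B : ℝ → ℝ be smooth, let δ₁,…,δ₉ be real constants with δ₁δ₃δ₅δ₇δ₉ ≠ 0, and let H : I → ℝ be smooth with H′ = h. Define X : I → ℝ by X′(x) = δ₅e^{δ₈H(x)} and X(x) = δ₅∫e^{δ₈H}dx + δ₆ (so X is a diffeomorphism of I onto J = X(I)). Suppose u : ℝ × I → ℝ is a smooth solution of f(x)u_t = (A(u)u_x)_x + h(x)B(u)u_x. Define ũ on ℝ × J by ũ(δ₁t+δ₂, X(x)) = δ₃u(t,x)+δ₄, and define f̃(X(x)) = δ₁δ₅⁻¹δ₉ f(x)e^{−2δ₈H(x)}, h̃(X(x)) = δ₉δ₇⁻¹h(x)e^{−δ₈H(x)}, Ã(δ₃v+δ₄) = δ₅δ₉A(v), B̃(δ₃v+δ₄) = δ₇(B(v)+δ₈A(v)). Then ũ is a smooth solution of f̃(x̃)ũ_t̃ = (Ã(ũ)ũ_x̃)_x̃ + h̃(x̃)B̃(ũ)ũ_x̃ on ℝ × J; i.e. these (in general nonlocal in the arbitrary elements) transformations preserve the subclass of equations with g = 1.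 -/

import Mathlib

open Set Real
open scoped ContDiff

/-- The extended equivalence (sub)group `Ĝ∼₁` preserving `g = 1`. With
`H' = h`, `X' = δ₅ e^{δ₈ H}` (so `X = δ₅ ∫ e^{δ₈ H} dx + δ₆`), the transformation
`t̃ = δ₁ t + δ₂`, `x̃ = X(x)`, `ũ = δ₃ u + δ₄`,
`f̃(X(x)) = δ₁ δ₅⁻¹ δ₉ f e^{-2δ₈ H}`, `h̃(X(x)) = δ₉ δ₇⁻¹ h e^{-δ₈ H}`,
`Ã(δ₃v+δ₄) = δ₅ δ₉ A(v)`, `B̃(δ₃v+δ₄) = δ₇ (B(v) + δ₈ A(v))`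
maps any smooth solution of `f u_t = (A(u) u_x)_x + h B(u) u_x` to a smooth solution
`ũ` (written `ut` below) of `f̃ ũ_t̃ = (Ã(ũ) ũ_x̃)_x̃ + h̃ B̃(ũ) ũ_x̃` on `ℝ × X(I)`. -/
theorem extended_equivalence_group_preserving_g_one
    (I : Set ℝ) (hIopen : IsOpen I) (hIconn : Convex ℝ I)
    (f h : ℝ → ℝ) (hf : ContDiffOn ℝ ∞ f I) (hh : ContDiffOn ℝ ∞ h I)
    (hf0 : ∀ x ∈ I, f x ≠ 0)
    (A B : ℝ → ℝ) (hA : ContDiff ℝ ∞ A) (hB : ContDiff ℝ ∞ B)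
    (δ₁ δ₂ δ₃ δ₄ δ₅ δ₆ δ₇ δ₈ δ₉ : ℝ)
    (hδ : δ₁ * δ₃ * δ₅ * δ₇ * δ₉ ≠ 0)
    (H : ℝ → ℝ) (hH : ContDiffOn ℝ ∞ H I) (hH' : ∀ x ∈ I, HasDerivAt H (h x) x)
    (X : ℝ → ℝ) (hX : ContDiffOn ℝ ∞ X I)
    (hX' : ∀ x ∈ I, HasDerivAt X (δ₅ * Real.exp (δ₈ * H x)) x)
    (u : ℝ → ℝ → ℝ)
    (hu : ContDiffOn ℝ ∞ (fun p : ℝ × ℝ => u p.1 p.2) (univ ×ˢ I))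
    (hpde : ∀ t : ℝ, ∀ x ∈ I,
      f x * deriv (fun s => u s x) t
        = deriv (fun y => A (u t y) * deriv (fun z => u t z) y) x
          + h x * B (u t x) * deriv (fun y => u t y) x)
    (ut : ℝ → ℝ → ℝ) (ft ht At Bt : ℝ → ℝ)
    (hutdef : ∀ t : ℝ, ∀ x ∈ I, ut (δ₁ * t + δ₂) (X x) = δ₃ * u t x + δ₄)
    (hftdef : ∀ x ∈ I, ft (X x) = δ₁ * δ₅⁻¹ * δ₉ * f x * Real.exp (-(2 * δ₈ * H x)))
    (hhtdef : ∀ x ∈ I, ht (X x) = δ₉ * δ₇⁻¹ * h x * Real.exp (-(δ₈ * H x)))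
    (hAtdef : ∀ v : ℝ, At (δ₃ * v + δ₄) = δ₅ * δ₉ * A v)
    (hBtdef : ∀ v : ℝ, Bt (δ₃ * v + δ₄) = δ₇ * (B v + δ₈ * A v)) :
    ContDiffOn ℝ ∞ (fun p : ℝ × ℝ => ut p.1 p.2) (univ ×ˢ (X '' I))
      ∧ ∀ t : ℝ, ∀ x ∈ I,
          ft (X x) * deriv (fun s => ut s (X x)) (δ₁ * t + δ₂)
            = deriv (fun y => At (ut (δ₁ * t + δ₂) y)
                * deriv (fun z => ut (δ₁ * t + δ₂) z) y) (X x)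
              + ht (X x) * Bt (ut (δ₁ * t + δ₂) (X x))
                * deriv (fun y => ut (δ₁ * t + δ₂) y) (X x) := by
  have hδ₁ : δ₁ ≠ 0 := fun h => hδ (by rw [h]; ring)
  have hδ₃ : δ₃ ≠ 0 := fun h => hδ (by rw [h]; ring)
  have hδ₅ : δ₅ ≠ 0 := fun h => hδ (by rw [h]; ring)
  have hδ₇ : δ₇ ≠ 0 := fun h => hδ (by rw [h]; ring)
  have hδ₉ : δ₉ ≠ 0 := fun h => hδ (by rw [h]; ring)
  have h1le : (1 : WithTop ℕ∞) ≤ ∞ := by exact_mod_cast le_top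
  have h1ne : (∞ : WithTop ℕ∞) ≠ 0 := (zero_lt_one.trans_le h1le).ne'
  have hIopen2 : IsOpen ((univ : Set ℝ) ×ˢ I) := isOpen_univ.prod hIopen
  have hc0 : ∀ x : ℝ, δ₅ * Real.exp (δ₈ * H x) ≠ 0 :=
    fun x => mul_ne_zero hδ₅ (Real.exp_ne_zero _)
  -- local inverses of X
  have key : ∀ x₀ ∈ I, ∃ g : ℝ → ℝ, ContDiffAt ℝ ∞ g (X x₀) ∧ g (X x₀) = x₀ ∧
      (∀ᶠ y in nhds (X x₀), X (g y) = y ∧ g y ∈ I) ∧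
      HasDerivAt g (δ₅ * Real.exp (δ₈ * H x₀))⁻¹ (X x₀) := by
    intro x₀ hx₀
    have hXc : ContDiffAt ℝ ∞ X x₀ := hX.contDiffAt (hIopen.mem_nhds hx₀)
    have hXd : HasStrictDerivAt X (δ₅ * Real.exp (δ₈ * H x₀)) x₀ := by
      have h1 := hXc.hasStrictDerivAt (n := ∞) h1ne
      rwa [(hX' x₀ hx₀).deriv] at h1
    have hfd : HasFDerivAt X
        (ContinuousLinearEquiv.unitsEquivAut ℝ
          (Units.mk0 (δ₅ * Real.exp (δ₈ * H x₀)) (hc0 x₀)) : ℝ →L[ℝ] ℝ) x₀ :=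
      (hXd.hasStrictFDerivAt_equiv (hc0 x₀)).hasFDerivAt
    set g := hXc.localInverse hfd h1ne with hg_def
    have hsmooth : ContDiffAt ℝ ∞ g (X x₀) := hXc.to_localInverse hfd h1ne
    have hstrict := hXc.hasStrictFDerivAt' hfd h1ne
    have himg : g (X x₀) = x₀ := hXc.localInverse_apply_image hfd h1ne
    have hright : ∀ᶠ y in nhds (X x₀), X (g y) = y := hstrict.eventually_right_inverse
    have hcont : ContinuousAt g (X x₀) := hstrict.localInverse_continuousAt
    have hmem : ∀ᶠ y in nhds (X x₀), g y ∈ I := by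
      have := hcont.preimage_mem_nhds (by rw [himg]; exact hIopen.mem_nhds hx₀)
      filter_upwards [this] with y hy using hy
    have hgd : HasDerivAt g (δ₅ * Real.exp (δ₈ * H x₀))⁻¹ (X x₀) :=
      HasDerivAt.of_local_left_inverse hcont (by rw [himg]; exact hX' x₀ hx₀) (hc0 x₀) hright
    exact ⟨g, hsmooth, himg, hright.and hmem, hgd⟩
  -- slice differentiability of u in time
  have hut_slice : ∀ (t' x' : ℝ), x' ∈ I → DifferentiableAt ℝ (fun s => u s x') t' := by
    intro t' x' hx'
    have h1 : DifferentiableAt ℝ (fun p : ℝ × ℝ => u p.1 p.2) (t', x') :=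
      (hu.contDiffAt (hIopen2.mem_nhds (by simp [hx']))).differentiableAt h1ne
    have h2 : DifferentiableAt ℝ (fun s : ℝ => ((s, x') : ℝ × ℝ)) t' :=
      differentiableAt_id.prodMk (differentiableAt_const x')
    simpa [Function.comp_def] using h1.comp t' h2
  -- slice smoothness of u in space
  have hx_slice : ∀ t' : ℝ, ContDiffOn ℝ ∞ (fun z => u t' z) I := by
    intro t'
    have h1 : ContDiffOn ℝ ∞ (fun z : ℝ => ((t', z) : ℝ × ℝ)) I :=
      (contDiff_const.prodMk contDiff_id).contDiffOn
    exact hu.comp h1 (fun z hz => by simp [hz])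
  constructor
  · -- smoothness of ut
    rintro ⟨s₀, y₀⟩ ⟨-, x₀, hx₀, rfl⟩
    obtain ⟨g, hg_smooth, hg_img, hg_ev, hg_d⟩ := key x₀ hx₀
    have hmap : ContDiffAt ℝ ∞ (fun p : ℝ × ℝ => (((p.1 - δ₂) / δ₁ : ℝ), g p.2)) (s₀, X x₀) := by
      apply ContDiffAt.prodMk
      · exact (contDiffAt_fst.sub contDiffAt_const).div_const δ₁
      · exact ContDiffAt.comp (s₀, X x₀) hg_smooth contDiffAt_snd
    have hupt : ContDiffAt ℝ ∞ (fun p : ℝ × ℝ => u p.1 p.2)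
        ((fun p : ℝ × ℝ => (((p.1 - δ₂) / δ₁ : ℝ), g p.2)) (s₀, X x₀)) := by
      simp only [hg_img]
      exact hu.contDiffAt (hIopen2.mem_nhds (by simp [hx₀]))
    have hcomp : ContDiffAt ℝ ∞ (fun p : ℝ × ℝ => u ((p.1 - δ₂) / δ₁) (g p.2)) (s₀, X x₀) := by
      simpa [Function.comp_def] using hupt.comp (s₀, X x₀) hmap
    have hsmooth2 : ContDiffAt ℝ ∞
        (fun p : ℝ × ℝ => δ₃ * u ((p.1 - δ₂) / δ₁) (g p.2) + δ₄) (s₀, X x₀) :=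
      (contDiffAt_const.mul hcomp).add contDiffAt_const
    have hev : (fun p : ℝ × ℝ => ut p.1 p.2) =ᶠ[nhds (s₀, X x₀)]
        fun p : ℝ × ℝ => δ₃ * u ((p.1 - δ₂) / δ₁) (g p.2) + δ₄ := by
      have h1 : ∀ᶠ p : ℝ × ℝ in nhds (s₀, X x₀), X (g p.2) = p.2 ∧ g p.2 ∈ I := by
        rw [nhds_prod_eq]
        exact hg_ev.prod_inr _
      filter_upwards [h1] with p hp
      have h2 := hutdef ((p.1 - δ₂) / δ₁) (g p.2) hp.2
      rw [hp.1, show δ₁ * ((p.1 - δ₂) / δ₁) + δ₂ = p.1 by field_simp; ring] at h2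
      exact h2
    exact (hsmooth2.congr_of_eventuallyEq hev).contDiffWithinAt
  · -- the transformed PDE
    intro t x hx
    have hpde' := hpde t x hx
    obtain ⟨g, hg_smooth, hg_img, hg_ev, hg_d⟩ := key x hx
    -- derivative of u-slices in space
    have hux_has : ∀ x' ∈ I,
        HasDerivAt (fun z => u t z) (deriv (fun z => u t z) x') x' := fun x' hx' =>
      (((hx_slice t).differentiableOn h1ne).differentiableAt (hIopen.mem_nhds hx')).hasDerivAt
    have hux_diff : DifferentiableAt ℝ (deriv (fun z => u t z)) x :=
      (((hx_slice t).deriv_of_isOpen hIopen (m := 1) (WithTop.coe_le_coe.mpr le_top)).differentiableOn one_ne_zero).differentiableAt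
        (hIopen.mem_nhds hx)
    set ux := deriv (fun z => u t z) with hux_def
    have hdt : HasDerivAt (fun s => u s x) (deriv (fun s => u s x) t) t :=
      (hut_slice t x hx).hasDerivAt
    set dt := deriv (fun s => u s x) t with hdt_def
    set tt := δ₁ * t + δ₂ with htt_def
    -- time derivative of ut
    have hDt : deriv (fun s => ut s (X x)) tt = δ₃ * (dt * δ₁⁻¹) := by
      have hg1 : (fun s => ut s (X x)) = fun s => δ₃ * u ((s - δ₂) / δ₁) x + δ₄ := by
        funext s
        have h2 := hutdef ((s - δ₂) / δ₁) x hx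
        rwa [show δ₁ * ((s - δ₂) / δ₁) + δ₂ = s by field_simp; ring] at h2
      rw [hg1]
      have hinner : HasDerivAt (fun s : ℝ => (s - δ₂) / δ₁) δ₁⁻¹ tt := by
        simpa [div_eq_mul_inv] using ((hasDerivAt_id tt).sub_const δ₂).div_const δ₁
      have houter : HasDerivAt (fun s => u s x) dt ((tt - δ₂) / δ₁) := by
        have htx : (tt - δ₂) / δ₁ = t := by rw [htt_def]; field_simp; ring
        rw [htx]; exact hdt
      have h3 := ((houter.comp tt hinner).const_mul δ₃).add_const δ₄
      simp only [Function.comp_def] at h3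
      exact h3.deriv
    -- space derivative of ut at every point of I
    have hDx_at : ∀ x' ∈ I, HasDerivAt (fun y => ut tt y)
        (δ₃ * ux x' * (δ₅ * Real.exp (δ₈ * H x'))⁻¹) (X x') := by
      intro x' hx'
      obtain ⟨g', hg'_smooth, hg'_img, hg'_ev, hg'_d⟩ := key x' hx'
      have hev : (fun y => ut tt y) =ᶠ[nhds (X x')] fun y => δ₃ * u t (g' y) + δ₄ := by
        filter_upwards [hg'_ev] with y hy
        have h2 := hutdef t (g' y) hy.2
        rwa [hy.1, ← htt_def] at h2
      have h1 : HasDerivAt (fun z => u t z) (ux x') (g' (X x')) := by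
        rw [hg'_img]; exact hux_has x' hx'
      have h2 := ((h1.comp (X x') hg'_d).const_mul δ₃).add_const δ₄
      simp only [Function.comp_def] at h2
      have hR : HasDerivAt (fun y => δ₃ * u t (g' y) + δ₄)
          (δ₃ * ux x' * (δ₅ * Real.exp (δ₈ * H x'))⁻¹) (X x') := by
        rw [show δ₃ * ux x' * (δ₅ * Real.exp (δ₈ * H x'))⁻¹
            = δ₃ * (ux x' * (δ₅ * Real.exp (δ₈ * H x'))⁻¹) by ring]
        exact h2
      exact hR.congr_of_eventuallyEq hev
    -- second spatial derivative term
    set P := fun y => A (u t y) * ux y with hP_def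
    have hP_diff : DifferentiableAt ℝ P x := by
      apply DifferentiableAt.mul _ hux_diff
      exact ((hA.differentiable h1ne).differentiableAt).comp x
        (((hx_slice t).differentiableOn h1ne).differentiableAt (hIopen.mem_nhds hx))
    set dP := deriv P x with hdP_def
    have hPd : HasDerivAt P dP x := hP_diff.hasDerivAt
    have hcinv : HasDerivAt (fun x' => (δ₅ * Real.exp (δ₈ * H x'))⁻¹)
        (-(δ₅ * (Real.exp (δ₈ * H x) * (δ₈ * h x))) / (δ₅ * Real.exp (δ₈ * H x)) ^ 2) x := by
      have h1 : HasDerivAt (fun x' => δ₈ * H x') (δ₈ * h x) x := (hH' x hx).const_mul δ₈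
      have h2 : HasDerivAt (fun x' => Real.exp (δ₈ * H x'))
          (Real.exp (δ₈ * H x) * (δ₈ * h x)) x := h1.exp
      exact (h2.const_mul δ₅).inv (hc0 x)
    have hG : HasDerivAt (fun x' => δ₃ * δ₅ * δ₉ * (P x' * (δ₅ * Real.exp (δ₈ * H x'))⁻¹))
        (δ₃ * δ₅ * δ₉ * (dP * (δ₅ * Real.exp (δ₈ * H x))⁻¹
          + P x * (-(δ₅ * (Real.exp (δ₈ * H x) * (δ₈ * h x))) / (δ₅ * Real.exp (δ₈ * H x)) ^ 2)))
        x := (hPd.mul hcinv).const_mul _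
    have hGg : HasDerivAt ((fun x' => δ₃ * δ₅ * δ₉ * (P x' * (δ₅ * Real.exp (δ₈ * H x'))⁻¹)) ∘ g)
        (δ₃ * δ₅ * δ₉ * (dP * (δ₅ * Real.exp (δ₈ * H x))⁻¹
          + P x * (-(δ₅ * (Real.exp (δ₈ * H x) * (δ₈ * h x))) / (δ₅ * Real.exp (δ₈ * H x)) ^ 2))
          * (δ₅ * Real.exp (δ₈ * H x))⁻¹) (X x) :=
      HasDerivAt.comp (X x) (by rwa [hg_img]) hg_d
    have hQev : (fun y => At (ut tt y) * deriv (fun z => ut tt z) y) =ᶠ[nhds (X x)]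
        ((fun x' => δ₃ * δ₅ * δ₉ * (P x' * (δ₅ * Real.exp (δ₈ * H x'))⁻¹)) ∘ g) := by
      filter_upwards [hg_ev] with y hy
      have h1 : ut tt y = δ₃ * u t (g y) + δ₄ := by
        have h2 := hutdef t (g y) hy.2
        rwa [hy.1, ← htt_def] at h2
      have h2 : deriv (fun z => ut tt z) y = δ₃ * ux (g y) * (δ₅ * Real.exp (δ₈ * H (g y)))⁻¹ := by
        have h3 := hDx_at (g y) hy.2
        rw [hy.1] at h3
        exact h3.deriv
      rw [h1, h2, hAtdef]
      simp only [Function.comp_def, hP_def]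
      ring
    have hDP : deriv (fun y => At (ut tt y) * deriv (fun z => ut tt z) y) (X x)
        = δ₃ * δ₅ * δ₉ * (dP * (δ₅ * Real.exp (δ₈ * H x))⁻¹
          + P x * (-(δ₅ * (Real.exp (δ₈ * H x) * (δ₈ * h x))) / (δ₅ * Real.exp (δ₈ * H x)) ^ 2))
          * (δ₅ * Real.exp (δ₈ * H x))⁻¹ := by
      rw [hQev.deriv_eq]
      exact hGg.deriv
    have hPx : P x = A (u t x) * ux x := rfl
    have hdP_eq : dP = f x * dt - h x * B (u t x) * ux x := by linarith [hpde']
    have hDx : deriv (fun y => ut tt y) (X x)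
        = δ₃ * ux x * (δ₅ * Real.exp (δ₈ * H x))⁻¹ := (hDx_at x hx).deriv
    have hexp2 : Real.exp (-(2 * δ₈ * H x))
        = (Real.exp (δ₈ * H x) * Real.exp (δ₈ * H x))⁻¹ := by
      rw [← Real.exp_add, ← Real.exp_neg]
      ring_nf
    have hexp1 : Real.exp (-(δ₈ * H x)) = (Real.exp (δ₈ * H x))⁻¹ := Real.exp_neg _
    rw [hftdef x hx, hhtdef x hx, hDt, hDP, hDx, hutdef t x hx, hBtdef, hPx, hdP_eq,
      hexp2, hexp1]
    have he0 : Real.exp (δ₈ * H x) ≠ 0 := Real.exp_ne_zero _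
    field_simp
    ring
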